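/- Let ε ∈ (0,1] and κ₀ > 0 small enough. For ξ ∈ ℝ³ with ε|ξ|² ≤ 2κ₀, the Hessian determinant of b satisfies det(∇²b(ξ)) = ((1−2ε²|ξ|²)/b(ξ))³ · (1−6ε²|ξ|²−3ε²|ξ|⁴+2ε⁴|ξ|⁶)/(b(ξ)²(1−2ε²|ξ|²)), where b(ξ) = √(1+|ξ|²−ε²|ξ|⁴). In particular, if moreover |ξ| ≤ 2, then det(∇²b(ξ)) ≥ 1/(2⁴ · 5²) uniformly in ε ∈ (0,1]. -/

import Mathlib

open EuclideanSpace

set_option maxHeartbeats 1000000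

private lemma hasDerivAt_poly (ε s₀ : ℝ) :
    HasDerivAt (fun s : ℝ => 1 + s - ε^2*s^2) (1 - 2*ε^2*s₀) s₀ := by
  have h := ((hasDerivAt_id s₀).const_add (1:ℝ)).sub (((hasDerivAt_pow 2 s₀)).const_mul (ε^2))
  convert h using 1
  · rfl
  · rfl
  · funext x; simp
  · simp; ring

private lemma fderiv_b_apply (ε : ℝ) (y : EuclideanSpace ℝ (Fin 3)) (j : Fin 3)
    (hg : 0 < 1 + ‖y‖^2 - ε^2*‖y‖^4) :
    fderiv ℝ (fun x : EuclideanSpace ℝ (Fin 3) => Real.sqrt (1 + ‖x‖^2 - ε^2*‖x‖^4)) y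
      (EuclideanSpace.single j 1)
      = ((1 - 2*ε^2*‖y‖^2)/Real.sqrt (1 + ‖y‖^2 - ε^2*‖y‖^4)) * y j := by
  have hq : HasFDerivAt (fun x : EuclideanSpace ℝ (Fin 3) => ‖x‖^2) (2 • innerSL ℝ y) y :=
    (hasStrictFDerivAt_norm_sq y).hasFDerivAt
  set t := ‖y‖^2 with ht
  have hg' : (0:ℝ) < 1 + t - ε^2*t^2 := by rw [ht]; convert hg using 2; ring
  have hs : Real.sqrt (1 + t - ε^2*t^2) ≠ 0 := ne_of_gt (Real.sqrt_pos.mpr hg')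
  have hd : HasDerivAt (fun s : ℝ => Real.sqrt (1 + s - ε^2*s^2))
      (1/(2*Real.sqrt (1 + t - ε^2*t^2)) * (1 - 2*ε^2*t)) t :=
    (Real.hasDerivAt_sqrt (ne_of_gt hg')).comp t (hasDerivAt_poly ε t)
  have hcomp := hd.comp_hasFDerivAt y hq
  have hfun : (fun x : EuclideanSpace ℝ (Fin 3) => Real.sqrt (1 + ‖x‖^2 - ε^2*‖x‖^4))
      = ((fun s : ℝ => Real.sqrt (1 + s - ε^2*s^2)) ∘ (fun x : EuclideanSpace ℝ (Fin 3) => ‖x‖^2)) := by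
    funext x; simp only [Function.comp]; congr 1; ring
  rw [hfun, hcomp.fderiv]
  have hsq : Real.sqrt (1 + t - ε^2*t^2) = Real.sqrt (1 + ‖y‖^2 - ε^2*‖y‖^4) := by
    congr 1; rw [ht]; ring
  simp only [ContinuousLinearMap.smul_apply, ContinuousLinearMap.coe_smul', Pi.smul_apply,
    innerSL_apply_apply, smul_eq_mul]
  rw [← hsq]
  have hinner : (inner ℝ y (EuclideanSpace.single j (1:ℝ)) : ℝ) = y j := by
    rw [EuclideanSpace.inner_single_right]; simp
  rw [hinner]
  field_simp
  ring

private lemma hessian_entry (ε : ℝ) (ξ : EuclideanSpace ℝ (Fin 3)) (i j : Fin 3)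
    (hg : 0 < 1 + ‖ξ‖^2 - ε^2*‖ξ‖^4) :
    fderiv ℝ
        (fun y : EuclideanSpace ℝ (Fin 3) =>
          fderiv ℝ (fun x : EuclideanSpace ℝ (Fin 3) =>
              Real.sqrt (1 + ‖x‖ ^ 2 - ε ^ 2 * ‖x‖ ^ 4)) y (EuclideanSpace.single j 1))
        ξ (EuclideanSpace.single i 1)
      = ((1 - 2*ε^2*‖ξ‖^2)/Real.sqrt (1 + ‖ξ‖^2 - ε^2*‖ξ‖^4)) * (if j = i then 1 else 0)
        + ((-4*ε^2*(Real.sqrt (1 + ‖ξ‖^2 - ε^2*‖ξ‖^4))^2 - (1 - 2*ε^2*‖ξ‖^2)^2)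
            / (Real.sqrt (1 + ‖ξ‖^2 - ε^2*‖ξ‖^4))^3) * (ξ i * ξ j) := by
  have hopen : IsOpen {y : EuclideanSpace ℝ (Fin 3) | 0 < 1 + ‖y‖^2 - ε^2*‖y‖^4} := by
    apply isOpen_lt continuous_const
    fun_prop
  have hev : (fun y : EuclideanSpace ℝ (Fin 3) =>
      fderiv ℝ (fun x : EuclideanSpace ℝ (Fin 3) =>
        Real.sqrt (1 + ‖x‖ ^ 2 - ε ^ 2 * ‖x‖ ^ 4)) y (EuclideanSpace.single j 1))
      =ᶠ[nhds ξ] (fun y => ((1 - 2*ε^2*‖y‖^2)/Real.sqrt (1 + ‖y‖^2 - ε^2*‖y‖^4)) * y j) := by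
    filter_upwards [hopen.mem_nhds hg] with y hy
    exact fderiv_b_apply ε y j hy
  rw [hev.fderiv_eq]
  -- derivative of the coefficient function
  have hq : HasFDerivAt (fun x : EuclideanSpace ℝ (Fin 3) => ‖x‖^2) (2 • innerSL ℝ ξ) ξ :=
    (hasStrictFDerivAt_norm_sq ξ).hasFDerivAt
  set t := ‖ξ‖^2 with ht
  have hg' : (0:ℝ) < 1 + t - ε^2*t^2 := by rw [ht]; convert hg using 2; ring
  set s := Real.sqrt (1 + t - ε^2*t^2) with hsdef
  have hspos : 0 < s := Real.sqrt_pos.mpr hg'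
  have hn : HasDerivAt (fun u : ℝ => 1 - 2*ε^2*u) (-(2*ε^2)) t := by
    simpa using (HasDerivAt.const_sub (1:ℝ) ((hasDerivAt_id t).const_mul (2*ε^2)))
  have hd : HasDerivAt (fun u : ℝ => Real.sqrt (1 + u - ε^2*u^2))
      (1/(2*s) * (1 - 2*ε^2*t)) t :=
    (Real.hasDerivAt_sqrt (ne_of_gt hg')).comp t (hasDerivAt_poly ε t)
  have hφ : HasDerivAt (fun u : ℝ => (1 - 2*ε^2*u)/Real.sqrt (1 + u - ε^2*u^2))
      (((-(2*ε^2)) * s - (1 - 2*ε^2*t) * (1/(2*s) * (1 - 2*ε^2*t))) / s^2) t :=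
    hn.div hd (ne_of_gt hspos)
  have hc : HasFDerivAt (fun y : EuclideanSpace ℝ (Fin 3) =>
      (1 - 2*ε^2*‖y‖^2)/Real.sqrt (1 + ‖y‖^2 - ε^2*‖y‖^4))
      ((((-(2*ε^2)) * s - (1 - 2*ε^2*t) * (1/(2*s) * (1 - 2*ε^2*t))) / s^2) • (2 • innerSL ℝ ξ)) ξ := by
    have hcomp := hφ.comp_hasFDerivAt ξ hq
    have hfun : (fun y : EuclideanSpace ℝ (Fin 3) =>
        (1 - 2*ε^2*‖y‖^2)/Real.sqrt (1 + ‖y‖^2 - ε^2*‖y‖^4))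
        = ((fun u : ℝ => (1 - 2*ε^2*u)/Real.sqrt (1 + u - ε^2*u^2)) ∘
            (fun y : EuclideanSpace ℝ (Fin 3) => ‖y‖^2)) := by
      funext y; simp only [Function.comp]; congr 2; ring
    rw [hfun]
    exact hcomp
  have hproj : HasFDerivAt (fun y : EuclideanSpace ℝ (Fin 3) => y j)
      (EuclideanSpace.proj j : EuclideanSpace ℝ (Fin 3) →L[ℝ] ℝ) ξ :=
    (EuclideanSpace.proj j (𝕜 := ℝ)).hasFDerivAt
  have hmul : HasFDerivAt (fun y : EuclideanSpace ℝ (Fin 3) =>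
      (1 - 2*ε^2*‖y‖^2)/Real.sqrt (1 + ‖y‖^2 - ε^2*‖y‖^4) * y j) _ ξ := hc.mul hproj
  rw [hmul.fderiv]
  have hinner : (inner ℝ ξ (EuclideanSpace.single i (1:ℝ)) : ℝ) = ξ i := by
    rw [EuclideanSpace.inner_single_right]; simp
  have hsq : Real.sqrt (1 + ‖ξ‖^2 - ε^2*‖ξ‖^4) = s := by
    rw [hsdef]; congr 1; rw [ht]; ring
  have hsq' : Real.sqrt (1 + t - ε^2*‖ξ‖^4) = s := by
    rw [hsdef]; congr 1
  rw [← ht]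
  simp only [ContinuousLinearMap.add_apply, ContinuousLinearMap.smul_apply,
    ContinuousLinearMap.coe_smul', Pi.smul_apply, innerSL_apply_apply, smul_eq_mul, hinner, hsq, hsq']
  have hproj_single : (EuclideanSpace.proj j : EuclideanSpace ℝ (Fin 3) →L[ℝ] ℝ)
      (EuclideanSpace.single i 1) = if j = i then 1 else 0 := by
    simp [EuclideanSpace.single_apply]
  rw [hproj_single]
  have hs0 : s ≠ 0 := ne_of_gt hspos
  by_cases hij : j = i <;> simp only [hij, if_true, if_neg] <;> simp [hij] <;> field_simp <;> ring

private lemma det_aI_add_bvv (a b : ℝ) (v : Fin 3 → ℝ) :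
    (Matrix.of fun i j : Fin 3 => (a * if j = i then 1 else 0) + b * (v i * v j)).det
      = a^3 + a^2*b*((v 0)^2 + (v 1)^2 + (v 2)^2) := by
  rw [Matrix.det_fin_three]
  simp only [Matrix.of_apply]
  norm_num [Fin.ext_iff]
  ring


/-- explicit formula for the Hessian determinant of
`b(ξ) = √(1+|ξ|²−ε²|ξ|⁴)` on the region `ε|ξ|² ≤ 2κ₀` (for `κ₀` small enough, quantified by
`1−12εκ₀−12κ₀² ≥ 1/2` and `1−4εκ₀ ≥ 1/2`), and the uniform-in-`ε` lower bound
`det ∇²b(ξ) ≥ 1/(2⁴·5²)` when moreover `|ξ| ≤ 2`. -/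
theorem stmt3 (ε κ₀ : ℝ) (hε : 0 < ε) (hε1 : ε ≤ 1) (hκ : 0 < κ₀)
    (hκ1 : 1 / 2 ≤ 1 - 12 * ε * κ₀ - 12 * κ₀ ^ 2) (hκ2 : 1 / 2 ≤ 1 - 4 * ε * κ₀)
    (ξ : EuclideanSpace ℝ (Fin 3)) (hreg : ε * ‖ξ‖ ^ 2 ≤ 2 * κ₀) :
    (Matrix.of fun i j : Fin 3 =>
        fderiv ℝ
          (fun y : EuclideanSpace ℝ (Fin 3) =>
            fderiv ℝ (fun x : EuclideanSpace ℝ (Fin 3) =>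
                Real.sqrt (1 + ‖x‖ ^ 2 - ε ^ 2 * ‖x‖ ^ 4)) y (EuclideanSpace.single j 1))
          ξ (EuclideanSpace.single i 1)).det
      = ((1 - 2 * ε ^ 2 * ‖ξ‖ ^ 2) / Real.sqrt (1 + ‖ξ‖ ^ 2 - ε ^ 2 * ‖ξ‖ ^ 4)) ^ 3 *
          ((1 - 6 * ε ^ 2 * ‖ξ‖ ^ 2 - 3 * ε ^ 2 * ‖ξ‖ ^ 4 + 2 * ε ^ 4 * ‖ξ‖ ^ 6) /
            ((Real.sqrt (1 + ‖ξ‖ ^ 2 - ε ^ 2 * ‖ξ‖ ^ 4)) ^ 2 * (1 - 2 * ε ^ 2 * ‖ξ‖ ^ 2))) ∧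
    (‖ξ‖ ≤ 2 →
      1 / (2 ^ 4 * 5 ^ 2) ≤
        (Matrix.of fun i j : Fin 3 =>
          fderiv ℝ
            (fun y : EuclideanSpace ℝ (Fin 3) =>
              fderiv ℝ (fun x : EuclideanSpace ℝ (Fin 3) =>
                  Real.sqrt (1 + ‖x‖ ^ 2 - ε ^ 2 * ‖x‖ ^ 4)) y (EuclideanSpace.single j 1))
            ξ (EuclideanSpace.single i 1)).det) := by
  have ht0 : (0:ℝ) ≤ ‖ξ‖^2 := by positivity
  have hek : ε * κ₀ ≤ 1/24 ∧ κ₀^2 ≤ 1/24 := by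
    constructor <;> nlinarith [mul_pos hε hκ, sq_nonneg κ₀]
  have h1 : ε * (ε * ‖ξ‖^2) ≤ ε * (2*κ₀) := mul_le_mul_of_nonneg_left hreg hε.le
  have he2t : ε^2 * ‖ξ‖^4 ≤ 4 * κ₀^2 := by nlinarith [mul_nonneg hε.le ht0]
  have hgpos : (0:ℝ) < 1 + ‖ξ‖^2 - ε^2*‖ξ‖^4 := by nlinarith
  have hg'lb : (5/6 : ℝ) ≤ 1 - 2*ε^2*‖ξ‖^2 := by nlinarith [hek.1]
  have hg'pos : (0:ℝ) < 1 - 2*ε^2*‖ξ‖^2 := by linarith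
  set s := Real.sqrt (1 + ‖ξ‖^2 - ε^2*‖ξ‖^4) with hsdef
  have hspos : 0 < s := Real.sqrt_pos.mpr hgpos
  have hs0 : s ≠ 0 := ne_of_gt hspos
  have hs2 : s^2 = 1 + ‖ξ‖^2 - ε^2*‖ξ‖^4 := Real.sq_sqrt hgpos.le
  set A := (1 - 2*ε^2*‖ξ‖^2)/s with hA
  set B := (-4*ε^2*s^2 - (1 - 2*ε^2*‖ξ‖^2)^2)/s^3 with hB
  set M := (Matrix.of fun i j : Fin 3 =>
        fderiv ℝ
          (fun y : EuclideanSpace ℝ (Fin 3) =>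
            fderiv ℝ (fun x : EuclideanSpace ℝ (Fin 3) =>
                Real.sqrt (1 + ‖x‖ ^ 2 - ε ^ 2 * ‖x‖ ^ 4)) y (EuclideanSpace.single j 1))
          ξ (EuclideanSpace.single i 1)) with hMdef
  have hM : ∀ i j : Fin 3, M i j = A * (if j = i then 1 else 0) + B * (ξ i * ξ j) := by
    intro i j
    rw [hMdef, Matrix.of_apply, hessian_entry ε ξ i j hgpos]
  have hsum : (ξ 0)^2 + (ξ 1)^2 + (ξ 2)^2 = ‖ξ‖^2 := by
    have h := EuclideanSpace.norm_eq ξ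
    rw [h, Real.sq_sqrt (by positivity)]
    rw [Fin.sum_univ_three]
    simp [Real.norm_eq_abs, sq_abs]
  have hM' : M = Matrix.of (fun i j : Fin 3 => (A * if j = i then 1 else 0) + B * (ξ i * ξ j)) := by
    ext i j
    rw [hM i j, Matrix.of_apply]
  have hdet : M.det = A^3 + A^2*B*‖ξ‖^2 := by
    rw [hM', det_aI_add_bvv, hsum]
  set N := 1 - 6*ε^2*‖ξ‖^2 - 3*ε^2*‖ξ‖^4 + 2*ε^4*‖ξ‖^6 with hN
  have hNlb : (1/2 : ℝ) ≤ N := by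
    rw [hN]
    nlinarith [mul_nonneg (pow_nonneg hε.le 4) (pow_nonneg (norm_nonneg ξ) 6), he2t, h1, hek.1]
  have e1 : A^3 + A^2*B*‖ξ‖^2
      = (1 - 2*ε^2*‖ξ‖^2)^2 * ((1 - 6*ε^2*‖ξ‖^2)*s^2 - ‖ξ‖^2*(1 - 2*ε^2*‖ξ‖^2)^2) / s^5 := by
    rw [hA, hB]; field_simp; ring
  have e3 : (1 - 6*ε^2*‖ξ‖^2)*s^2 - ‖ξ‖^2*(1 - 2*ε^2*‖ξ‖^2)^2 = N := by
    rw [hs2, hN]; ring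
  have e2 : ((1 - 2 * ε ^ 2 * ‖ξ‖ ^ 2) / s) ^ 3 * (N / (s ^ 2 * (1 - 2 * ε ^ 2 * ‖ξ‖ ^ 2)))
      = (1 - 2*ε^2*‖ξ‖^2)^2 * N / s^5 := by
    field_simp
  have heq : M.det = ((1 - 2 * ε ^ 2 * ‖ξ‖ ^ 2) / s) ^ 3 *
      (N / (s ^ 2 * (1 - 2 * ε ^ 2 * ‖ξ‖ ^ 2))) := by
    rw [hdet, e1, e3, e2]
  refine ⟨heq, ?_⟩
  intro hr2
  rw [heq, e2]
  have hgle : (1:ℝ) + ‖ξ‖^2 - ε^2*‖ξ‖^4 ≤ 2.3^2 := by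
    nlinarith [pow_le_pow_left₀ (norm_nonneg ξ) hr2 2, sq_nonneg (ε*‖ξ‖^2)]
  have hsle : s ≤ 2.3 := by
    have h := Real.sqrt_le_sqrt hgle
    rwa [Real.sqrt_sq (by norm_num)] at h
  have hs5 : s^5 ≤ 2.3^5 := pow_le_pow_left₀ hspos.le hsle 5
  have hprod : (25/72 : ℝ) ≤ (1 - 2*ε^2*‖ξ‖^2)^2 * N := by
    nlinarith [hg'lb, hNlb, hg'pos]
  calc (1 : ℝ) / (2^4 * 5^2) ≤ (25/72) / 2.3^5 := by norm_num
    _ ≤ (1 - 2*ε^2*‖ξ‖^2)^2 * N / s^5 :=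
        div_le_div₀ (by nlinarith) hprod (by positivity) hs5
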